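/- Fix i ≥ 2. Let w₀, v₁, …, v_i be i.i.d. positive real-valued random variables, let u₁, …, u_i be arbitrary random variables with values in [0,1], and define the forward-coupled Metropolis weight chains W and W̃ from them. Then P(W_i = W̃_{i−1}) ≥ 1 − 2/(i+1); that is, the forward-coupled chains have coupled by step i with probability at least 1 − 2/(i+1). -/

import Mathlib

open MeasureTheory

/-- The Metropolis weight update: from current weight `w`, proposed weight `w'`, and
uniform draw `u`, accept the proposal iff `u ≤ min 1 (w'/w)`. -/
noncomputable def metroF (w w' u : ℝ) : ℝ := if u ≤ min 1 (w' / w) then w' else w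

/-- The forward Metropolis weight chain: `W 0 = w0`, `W (i+1) = f (W i) (v (i+1)) (u (i+1))`. -/
noncomputable def fwdChain (w0 : ℝ) (v u : ℕ → ℝ) : ℕ → ℝ
  | 0 => w0
  | i + 1 => metroF (fwdChain w0 v u i) (v (i + 1)) (u (i + 1))

/-- The forward-coupled tilde chain: it skips the first proposal, so
`W̃ 0 = w0`, `W̃ (i+1) = f (W̃ i) (v (i+2)) (u (i+2))`; it shares each pair `(v j, u j)`
with the main chain whenever it processes proposal `j`. -/
noncomputable def fwdChainT (w0 : ℝ) (v u : ℕ → ℝ) : ℕ → ℝ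
  | 0 => w0
  | i + 1 => metroF (fwdChainT w0 v u i) (v (i + 2)) (u (i + 2))

/-! ### Deterministic lemmas about the chains -/

lemma metroF_le (w w' u : ℝ) : metroF w w' u ≤ max w w' := by
  unfold metroF; split
  · exact le_max_right _ _
  · exact le_max_left _ _

lemma metroF_pos {w w' : ℝ} (hw : 0 < w) (hw' : 0 < w') (u : ℝ) : 0 < metroF w w' u := by
  unfold metroF; split <;> assumption

lemma metroF_accept {w w' u : ℝ} (hw : 0 < w) (hww' : w ≤ w') (hu : u ≤ 1) :
    metroF w w' u = w' := by
  unfold metroF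
  rw [if_pos]
  rw [min_eq_left ((one_le_div hw).2 hww')]
  exact hu

lemma fwdChain_pos {w0 : ℝ} {v : ℕ → ℝ} (u : ℕ → ℝ) (hw0 : 0 < w0) (hv : ∀ k, 0 < v k) :
    ∀ m, 0 < fwdChain w0 v u m
  | 0 => hw0
  | m + 1 => metroF_pos (fwdChain_pos u hw0 hv m) (hv (m + 1)) _

lemma fwdChainT_pos {w0 : ℝ} {v : ℕ → ℝ} (u : ℕ → ℝ) (hw0 : 0 < w0) (hv : ∀ k, 0 < v k) :
    ∀ m, 0 < fwdChainT w0 v u m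
  | 0 => hw0
  | m + 1 => metroF_pos (fwdChainT_pos u hw0 hv m) (hv (m + 2)) _

lemma fwdChain_le {w0 c : ℝ} {v u : ℕ → ℝ} (hw0 : w0 ≤ c) :
    ∀ m, (∀ l, 1 ≤ l → l ≤ m → v l ≤ c) → fwdChain w0 v u m ≤ c := by
  intro m
  induction m with
  | zero => intro _; exact hw0
  | succ m ih =>
    intro hv
    refine le_trans (metroF_le _ _ _) (max_le ?_ ?_)
    · exact ih fun l h1 h2 => hv l h1 (by omega)
    · exact hv (m + 1) (by omega) le_rfl

lemma fwdChainT_le {w0 c : ℝ} {v u : ℕ → ℝ} (hw0 : w0 ≤ c) :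
    ∀ m, (∀ l, 2 ≤ l → l ≤ m + 1 → v l ≤ c) → fwdChainT w0 v u m ≤ c := by
  intro m
  induction m with
  | zero => intro _; exact hw0
  | succ m ih =>
    intro hv
    refine le_trans (metroF_le _ _ _) (max_le ?_ ?_)
    · exact ih fun l h1 h2 => hv l h1 (by omega)
    · exact hv (m + 2) (by omega) le_rfl

lemma couple_propagate {w0 : ℝ} {v u : ℕ → ℝ} {j : ℕ} (hj : 1 ≤ j)
    (h : fwdChain w0 v u j = fwdChainT w0 v u (j - 1)) :
    ∀ m, j ≤ m → fwdChain w0 v u m = fwdChainT w0 v u (m - 1) := by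
  intro m
  induction m with
  | zero => intro h0; omega
  | succ m ih =>
    intro hjm
    rcases Nat.eq_or_lt_of_le hjm with heq | hlt
    · rw [← heq]; exact h
    · have hm : j ≤ m := by omega
      obtain ⟨m', rfl⟩ : ∃ m', m = m' + 1 := ⟨m - 1, by omega⟩
      have ihm := ih hm
      show metroF (fwdChain w0 v u (m' + 1)) (v (m' + 2)) (u (m' + 2))
          = metroF (fwdChainT w0 v u m') (v (m' + 2)) (u (m' + 2))
      rw [show fwdChain w0 v u (m' + 1) = fwdChainT w0 v u m' from ihm]

/-- If some proposal `j` with `2 ≤ j ≤ i` dominates all earlier weights, the chains couple. -/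
lemma coupled_of_record {v u : ℕ → ℝ} (hv : ∀ k, 0 < v k) (hu : ∀ k, u k ≤ 1)
    {i j : ℕ} (hj2 : 2 ≤ j) (hji : j ≤ i) (hrec : ∀ l, l < j → v l ≤ v j) :
    fwdChain (v 0) v u i = fwdChainT (v 0) v u (i - 1) := by
  obtain ⟨j', rfl⟩ : ∃ j', j = j' + 2 := ⟨j - 2, by omega⟩
  have hpos0 : 0 < v 0 := hv 0
  have hchain : fwdChain (v 0) v u (j' + 2) = v (j' + 2) := by
    show metroF (fwdChain (v 0) v u (j' + 1)) (v (j' + 2)) (u (j' + 2)) = v (j' + 2)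
    exact metroF_accept (fwdChain_pos u hpos0 hv _)
      (fwdChain_le (hrec 0 (by omega)) _ (fun l h1 h2 => hrec l (by omega))) (hu _)
  have hchainT : fwdChainT (v 0) v u (j' + 1) = v (j' + 2) := by
    show metroF (fwdChainT (v 0) v u j') (v (j' + 2)) (u (j' + 2)) = v (j' + 2)
    exact metroF_accept (fwdChainT_pos u hpos0 hv _)
      (fwdChainT_le (hrec 0 (by omega)) _ (fun l h1 h2 => hrec l (by omega))) (hu _)
  exact couple_propagate (by omega)
    (by rw [show j' + 2 - 1 = j' + 1 from rfl, hchain, hchainT]) i hji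

/-- If there is never a record among indices `2..i`, every such value is below
`max (v 0) (v 1)`. -/
lemma below_max {v : ℕ → ℝ} {i : ℕ} (h : ∀ j, 2 ≤ j → j ≤ i → ∃ l, l < j ∧ v j < v l) :
    ∀ j, 2 ≤ j → j ≤ i → v j < max (v 0) (v 1) := by
  intro j
  induction j using Nat.strong_induction_on with
  | _ j ih =>
    intro h2 hji
    obtain ⟨l, hl, hvl⟩ := h j h2 hji
    rcases Nat.lt_or_ge l 2 with hl2 | hl2
    · have : v l ≤ max (v 0) (v 1) := by
        interval_cases l
        · exact le_max_left _ _
        · exact le_max_right _ _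
      linarith
    · exact hvl.trans (ih l hl hl2 (by omega))

/-! ### Exchangeability machinery -/

/-- Event in `Fin n → ℝ`: pivot `p` weakly dominates coordinates in `S`, strictly
dominates the rest. -/
def pivEvent (n : ℕ) (p : Fin n) (S : Set (Fin n)) : Set (Fin n → ℝ) :=
  {x | ∀ j, j ≠ p → (j ∈ S → x j ≤ x p) ∧ (j ∉ S → x j < x p)}

lemma measurableSet_pivEvent (n : ℕ) (p : Fin n) (S : Set (Fin n)) :
    MeasurableSet (pivEvent n p S) := by
  have h : pivEvent n p S
      = ⋂ j, {x : Fin n → ℝ | j ≠ p → (j ∈ S → x j ≤ x p) ∧ (j ∉ S → x j < x p)} := by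
    ext x; simp [pivEvent, Set.mem_iInter]
  rw [h]
  refine MeasurableSet.iInter fun j => ?_
  by_cases hjp : j = p
  · have : {x : Fin n → ℝ | j ≠ p → (j ∈ S → x j ≤ x p) ∧ (j ∉ S → x j < x p)}
        = Set.univ := by ext x; simp [hjp]
    rw [this]; exact MeasurableSet.univ
  · by_cases hjS : j ∈ S
    · have : {x : Fin n → ℝ | j ≠ p → (j ∈ S → x j ≤ x p) ∧ (j ∉ S → x j < x p)}
          = {x : Fin n → ℝ | x j ≤ x p} := by ext x; simp [hjp, hjS]
      rw [this]; exact measurableSet_le (measurable_pi_apply _) (measurable_pi_apply _)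
    · have : {x : Fin n → ℝ | j ≠ p → (j ∈ S → x j ≤ x p) ∧ (j ∉ S → x j < x p)}
          = {x : Fin n → ℝ | x j < x p} := by ext x; simp [hjp, hjS]
      rw [this]; exact measurableSet_lt (measurable_pi_apply _) (measurable_pi_apply _)

lemma pivEvent_mono (n : ℕ) (p : Fin n) {S S' : Set (Fin n)} (h : S ⊆ S') :
    pivEvent n p S ⊆ pivEvent n p S' := by
  intro x hx j hjp
  obtain ⟨h1, h2⟩ := hx j hjp
  refine ⟨fun hjS' => ?_, fun hjS' => h2 fun hjS => hjS' (h hjS)⟩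
  by_cases hjS : j ∈ S
  · exact h1 hjS
  · exact (h2 hjS).le

lemma pi_map_perm (ν : Measure ℝ) [IsProbabilityMeasure ν] (n : ℕ) (σ : Equiv.Perm (Fin n)) :
    (Measure.pi (fun _ : Fin n => ν)).map (fun x j => x (σ j))
      = Measure.pi (fun _ : Fin n => ν) := by
  refine (Measure.pi_eq fun s hs => ?_).symm
  rw [Measure.map_apply (measurable_pi_lambda _ fun j => measurable_pi_apply (σ j))
    (MeasurableSet.univ_pi hs)]
  have h : (fun (x : Fin n → ℝ) j => x (σ j)) ⁻¹' Set.pi Set.univ s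
      = Set.pi Set.univ (fun k => s (σ.symm k)) := by
    ext x
    simp only [Set.mem_preimage, Set.mem_pi, Set.mem_univ, true_implies]
    constructor
    · intro h k; have := h (σ.symm k); rwa [Equiv.apply_symm_apply] at this
    · intro h j; have := h (σ j); rwa [Equiv.symm_apply_apply] at this
  rw [h, Measure.pi_pi]
  exact Fintype.prod_equiv σ.symm _ _ fun k => rfl

lemma pivEvent_perm (ν : Measure ℝ) [IsProbabilityMeasure ν] (n : ℕ)
    (σ : Equiv.Perm (Fin n)) (p : Fin n) (S : Set (Fin n)) :
    Measure.pi (fun _ : Fin n => ν) (pivEvent n (σ p) {k | σ.symm k ∈ S})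
      = Measure.pi (fun _ : Fin n => ν) (pivEvent n p S) := by
  have hmap := pi_map_perm ν n σ
  have hmeas : Measurable (fun (x : Fin n → ℝ) j => x (σ j)) :=
    measurable_pi_lambda _ fun j => measurable_pi_apply (σ j)
  have hset : (fun (x : Fin n → ℝ) j => x (σ j)) ⁻¹' pivEvent n p S
      = pivEvent n (σ p) {k | σ.symm k ∈ S} := by
    ext x
    simp only [pivEvent, Set.mem_preimage, Set.mem_setOf_eq]
    constructor
    · intro h k hk
      have hj : σ.symm k ≠ p := fun e => hk (by rw [← e, Equiv.apply_symm_apply])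
      have := h (σ.symm k) hj
      rwa [Equiv.apply_symm_apply] at this
    · intro h j hj
      have hk : σ j ≠ σ p := fun e => hj (σ.injective e)
      have := h (σ j) hk
      rwa [Equiv.symm_apply_apply] at this
  calc Measure.pi (fun _ : Fin n => ν) (pivEvent n (σ p) {k | σ.symm k ∈ S})
      = Measure.pi (fun _ : Fin n => ν)
          ((fun (x : Fin n → ℝ) j => x (σ j)) ⁻¹' pivEvent n p S) := by rw [hset]
    _ = ((Measure.pi (fun _ : Fin n => ν)).map (fun x j => x (σ j)))
          (pivEvent n p S) := (Measure.map_apply hmeas (measurableSet_pivEvent n p S)).symm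
    _ = Measure.pi (fun _ : Fin n => ν) (pivEvent n p S) := by rw [hmap]

lemma lastArgmax_disjoint (n : ℕ) :
    Pairwise (Function.onFun Disjoint (fun k : Fin n => pivEvent n k {j | j < k})) := by
  intro k k' hkk'
  rw [Function.onFun, Set.disjoint_left]
  rintro x hx hx'
  rcases lt_or_gt_of_ne hkk' with h | h
  · have h1 := (hx k' (ne_of_gt h)).2 (by simp [not_lt.2 h.le])
    have h2 := (hx' k hkk').1 (by simpa using h)
    linarith
  · have h1 := (hx' k hkk').2 (by simp [not_lt.2 h.le])
    have h2 := (hx k' hkk'.symm).1 (by simpa using h)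
    linarith

lemma lastArgmax_cover (n : ℕ) [NeZero n] :
    (⋃ k : Fin n, pivEvent n k {j | j < k}) = Set.univ := by
  rw [Set.iUnion_eq_univ_iff]
  intro x
  obtain ⟨k1, -, hk1⟩ := Finset.exists_max_image Finset.univ x ⟨0, Finset.mem_univ 0⟩
  set T : Finset (Fin n) := Finset.univ.filter (fun k => ∀ j, x j ≤ x k) with hT
  have hTne : T.Nonempty := ⟨k1, by simp [hT]; intro j; exact hk1 j (Finset.mem_univ j)⟩
  set k0 := T.max' hTne with hk0
  have hk0T : k0 ∈ T := T.max'_mem hTne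
  have hk0max : ∀ j, x j ≤ x k0 := by
    have := Finset.mem_filter.1 hk0T
    exact this.2
  refine ⟨k0, fun j hj => ⟨fun _ => hk0max j, fun hjk => ?_⟩⟩
  refine lt_of_le_of_ne (hk0max j) fun he => ?_
  have hjT : j ∈ T := Finset.mem_filter.2 ⟨Finset.mem_univ j, fun l => he ▸ hk0max l⟩
  exact hjk (lt_of_le_of_ne (T.le_max' j hjT) hj)

lemma joint_law {Ω : Type*} [MeasurableSpace Ω] (μ : Measure Ω) [IsProbabilityMeasure μ]
    (n : ℕ) (v : ℕ → Ω → ℝ) (hvmeas : ∀ k, Measurable (v k))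
    (hindep : ProbabilityTheory.iIndepFun
      (fun k : Fin n => v k) μ)
    (hident : ∀ k : Fin n, μ.map (v k) = μ.map (v 0)) :
    μ.map (fun ω (k : Fin n) => v k ω) = Measure.pi (fun _ : Fin n => μ.map (v 0)) := by
  have hν : IsProbabilityMeasure (μ.map (v 0)) :=
    Measure.isProbabilityMeasure_map (hvmeas 0).aemeasurable
  have hX : Measurable (fun ω (k : Fin n) => v k ω) :=
    measurable_pi_lambda _ fun k => hvmeas k
  refine (Measure.pi_eq fun s hs => ?_).symm
  rw [Measure.map_apply hX (MeasurableSet.univ_pi hs)]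
  have hpre : (fun ω (k : Fin n) => v k ω) ⁻¹' Set.pi Set.univ s
      = ⋂ k : Fin n, v k ⁻¹' s k := by
    ext ω; simp [Set.mem_pi]
  rw [hpre, hindep.meas_iInter fun k => ⟨s k, hs k, rfl⟩]
  refine Finset.prod_congr rfl fun k _ => ?_
  rw [← hident k, Measure.map_apply (hvmeas _) (hs k)]

/-- **Forward coupling probability bound (Lemma 2).** If `w0 = v 0, v 1, …, v i` are
i.i.d. positive random weights and `u 1, …, u i` are arbitrary `[0,1]`-valued random
variables, then the forward-coupled chains have coupled by step `i ≥ 2` with probability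
at least `1 - 2/(i+1)`. -/
theorem fwd_coupling_probability
    {Ω : Type*} [MeasurableSpace Ω] (μ : Measure Ω) [IsProbabilityMeasure μ]
    (i : ℕ) (hi : 2 ≤ i) (v u : ℕ → Ω → ℝ)
    (hvmeas : ∀ k, Measurable (v k)) (humeas : ∀ k, Measurable (u k))
    (hvpos : ∀ k ω, 0 < v k ω) (hu : ∀ k ω, u k ω ∈ Set.Icc (0 : ℝ) 1)
    (hindep : ProbabilityTheory.iIndepFun
      (fun k : Fin (i + 1) => v k) μ)
    (hident : ∀ k : ℕ, k ≤ i → ProbabilityTheory.IdentDistrib (v k) (v 0) μ μ) :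
    1 - 2 / ((i : ℝ) + 1) ≤
      (μ {ω | fwdChain (v 0 ω) (fun k => v k ω) (fun k => u k ω) i
            = fwdChainT (v 0 ω) (fun k => v k ω) (fun k => u k ω) (i - 1)}).toReal := by
  classical
  set n := i + 1 with hn
  set ν := μ.map (v 0) with hνdef
  have hνp : IsProbabilityMeasure ν := Measure.isProbabilityMeasure_map (hvmeas 0).aemeasurable
  set π := Measure.pi (fun _ : Fin n => ν) with hπdef
  have hπp : IsProbabilityMeasure π := by
    rw [hπdef]; infer_instance
  -- the joint law
  have hlaw : μ.map (fun ω (k : Fin n) => v k ω) = π := by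
    rw [hπdef, hνdef]
    exact joint_law μ n v hvmeas hindep
      (fun k => (hident k (by have hlt := k.isLt; omega)).map_eq)
  have hX : Measurable (fun ω (k : Fin n) => v k ω) :=
    measurable_pi_lambda _ fun k => hvmeas (k : ℕ)
  -- the key events
  set EA := pivEvent n 0 {1} with hEAdef
  set EB := pivEvent n 1 (∅ : Set (Fin n)) with hEBdef
  set L := fun k : Fin n => pivEvent n k {j | j < k} with hLdef
  have hv1 : ((1 : Fin n) : ℕ) = 1 := by
    rw [Fin.val_one', hn]
    exact Nat.mod_eq_of_lt (by omega)
  have hv0 : ((0 : Fin n) : ℕ) = 0 := rfl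
  -- π EB equals π (pivEvent n 0 ∅)
  have hEB0 : π EB = π (pivEvent n 0 (∅ : Set (Fin n))) := by
    have h := pivEvent_perm ν n (Equiv.swap 0 1) 0 (∅ : Set (Fin n))
    have h1 : (Equiv.swap (0 : Fin n) 1) 0 = 1 := Equiv.swap_apply_left _ _
    have h2 : {k : Fin n | (Equiv.swap (0 : Fin n) 1).symm k ∈ (∅ : Set (Fin n))}
        = (∅ : Set (Fin n)) := by ext k; simp
    rw [h1, h2] at h
    exact h
  -- for every k, π (pivEvent n k ∅) = π (pivEvent n 0 ∅)
  have hBk : ∀ k : Fin n, π (pivEvent n k (∅ : Set (Fin n)))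
      = π (pivEvent n 0 (∅ : Set (Fin n))) := by
    intro k
    have h := pivEvent_perm ν n (Equiv.swap 0 k) 0 (∅ : Set (Fin n))
    have h1 : (Equiv.swap (0 : Fin n) k) 0 = k := Equiv.swap_apply_left _ _
    have h2 : {j : Fin n | (Equiv.swap (0 : Fin n) k).symm j ∈ (∅ : Set (Fin n))}
        = (∅ : Set (Fin n)) := by ext j; simp
    rw [h1, h2] at h
    exact h
  -- for every k ≠ 0, π (pivEvent n k {0}) = π EA
  have hAk : ∀ k : Fin n, k ≠ 0 → π (pivEvent n k {0}) = π EA := by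
    intro k hk
    set σ := (Equiv.swap (0 : Fin n) 1).trans (Equiv.swap 1 k) with hσ
    have h := pivEvent_perm ν n σ 0 ({1} : Set (Fin n))
    have h1 : σ 0 = k := by
      rw [hσ, Equiv.trans_apply, Equiv.swap_apply_left, Equiv.swap_apply_left]
    have hσ1 : σ 1 = 0 := by
      rw [hσ, Equiv.trans_apply, Equiv.swap_apply_right,
        Equiv.swap_apply_of_ne_of_ne (by rw [Ne, Fin.ext_iff, hv0, hv1]; omega) (Ne.symm hk)]
    have h2 : {j : Fin n | σ.symm j ∈ ({1} : Set (Fin n))} = ({0} : Set (Fin n)) := by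
      ext j
      simp only [Set.mem_setOf_eq, Set.mem_singleton_iff, Equiv.symm_apply_eq, hσ1]
    rw [h1, h2] at h
    exact h
  -- π (L 0) = π EB
  have hL0 : π (L 0) = π EB := by
    have h0 : {j : Fin n | j < 0} = (∅ : Set (Fin n)) := by
      ext j; simp
    rw [hLdef]
    simp only [h0]
    rw [← hEB0]
  -- monotone comparisons
  have hBleL : ∀ k : Fin n, π EB ≤ π (L k) := by
    intro k
    rw [hEB0, ← hBk k]
    exact measure_mono (pivEvent_mono n k (Set.empty_subset _))
  have hAleL : ∀ k : Fin n, k ≠ 0 → π EA ≤ π (L k) := by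
    intro k hk
    rw [← hAk k hk]
    refine measure_mono (pivEvent_mono n k ?_)
    intro j hj
    rw [Set.mem_singleton_iff] at hj
    subst hj
    exact (Fin.pos_iff_ne_zero' k).2 hk
  -- sum of the partition
  have hLmeas : ∀ k : Fin n, MeasurableSet (L k) := fun k => measurableSet_pivEvent n k _
  have hsum : ∑ k : Fin n, π (L k) = 1 := by
    have hU := measure_iUnion (μ := π) (lastArgmax_disjoint n) hLmeas
    rw [show (⋃ k : Fin n, L k) = Set.univ from lastArgmax_cover n] at hU
    rw [← tsum_fintype (L := SummationFilter.unconditional (Fin n))]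
    rw [← hU]
    exact measure_univ
  -- pass to real numbers
  have hfin : ∀ s : Set (Fin n → ℝ), π s ≠ ⊤ := fun s => measure_ne_top π s
  set tA := (π EA).toReal with htA
  set tB := (π EB).toReal with htB
  have hsumR : ∑ k : Fin n, (π (L k)).toReal = 1 := by
    rw [← ENNReal.toReal_sum (fun k _ => hfin (L k)), hsum, ENNReal.toReal_one]
  have hAleLR : ∀ k : Fin n, k ≠ 0 → tA ≤ (π (L k)).toReal :=
    fun k hk => ENNReal.toReal_mono (hfin _) (hAleL k hk)
  have hBleLR : ∀ k : Fin n, tB ≤ (π (L k)).toReal :=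
    fun k => ENNReal.toReal_mono (hfin _) (hBleL k)
  have hL0R : (π (L 0)).toReal = tB := by rw [hL0]
  -- combinatorial inequalities
  have hcard : (Finset.univ : Finset (Fin n)).card = n := by
    rw [Finset.card_univ, Fintype.card_fin]
  have h2 : (n : ℝ) * tB ≤ 1 := by
    have := Finset.card_nsmul_le_sum Finset.univ (fun k : Fin n => (π (L k)).toReal) tB
      (fun k _ => hBleLR k)
    rw [hcard, nsmul_eq_mul, hsumR] at this
    exact this
  have h1 : (i : ℝ) * tA + tB ≤ 1 := by
    have hmem : (0 : Fin n) ∈ (Finset.univ : Finset (Fin n)) := Finset.mem_univ _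
    have hsplit := Finset.add_sum_erase Finset.univ
      (fun k : Fin n => (π (L k)).toReal) hmem
    have hbound := Finset.card_nsmul_le_sum (Finset.univ.erase (0 : Fin n))
      (fun k : Fin n => (π (L k)).toReal) tA
      (fun k hk => hAleLR k (Finset.mem_erase.1 hk).1)
    rw [Finset.card_erase_of_mem hmem, hcard] at hbound
    have hcard' : n - 1 = i := by omega
    rw [hcard', nsmul_eq_mul] at hbound
    have : (π (L 0)).toReal + (∑ k ∈ Finset.univ.erase (0 : Fin n), (π (L k)).toReal)
        = 1 := by rw [hsplit, hsumR]
    rw [hL0R] at this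
    linarith
  -- arithmetic: tA + tB ≤ 2 / (i + 1)
  have hInat : (2 : ℝ) ≤ (i : ℝ) := by exact_mod_cast hi
  have htA0 : 0 ≤ tA := ENNReal.toReal_nonneg
  have htB0 : 0 ≤ tB := ENNReal.toReal_nonneg
  have hnreal : ((n : ℕ) : ℝ) = (i : ℝ) + 1 := by
    rw [hn]; push_cast; ring
  have h2' : ((i : ℝ) + 1) * tB ≤ 1 := by rw [← hnreal]; exact h2
  have harith : tA + tB ≤ 2 / ((i : ℝ) + 1) := by
    rw [le_div_iff₀ (by linarith : (0 : ℝ) < (i : ℝ) + 1)]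
    nlinarith [mul_le_mul_of_nonneg_left h1 (by linarith : (0 : ℝ) ≤ (i : ℝ) + 1),
      mul_le_mul_of_nonneg_left h2' (by linarith : (0 : ℝ) ≤ (i : ℝ) - 1)]
  -- the complement of the coupling event maps into EA ∪ EB
  set S := {ω | fwdChain (v 0 ω) (fun k => v k ω) (fun k => u k ω) i
      = fwdChainT (v 0 ω) (fun k => v k ω) (fun k => u k ω) (i - 1)} with hSdef
  have hsubset : Sᶜ ⊆ (fun ω (k : Fin n) => v k ω) ⁻¹' (EA ∪ EB) := by
    intro ω hω
    have hω' : ¬ (fwdChain (v 0 ω) (fun k => v k ω) (fun k => u k ω) i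
        = fwdChainT (v 0 ω) (fun k => v k ω) (fun k => u k ω) (i - 1)) := hω
    have hnorec : ∀ j, 2 ≤ j → j ≤ i → ∃ l, l < j ∧ v j ω < v l ω := by
      intro j hj2 hji
      by_contra hcon
      push_neg at hcon
      exact hω' (coupled_of_record (fun k => hvpos k ω) (fun k => (hu k ω).2)
        hj2 hji (fun l hl => hcon l hl))
    have hbm := below_max hnorec
    by_cases hc : v 1 ω ≤ v 0 ω
    · left
      rw [hEAdef]
      intro j hj0
      have hj0' : (j : ℕ) ≠ 0 := by
        intro h; exact hj0 (Fin.ext (by rw [h, hv0]))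
      constructor
      · intro hj1
        rw [Set.mem_singleton_iff] at hj1
        show v (j : ℕ) ω ≤ v ((0 : Fin n) : ℕ) ω
        rw [hj1, hv1, hv0]
        exact hc
      · intro hj1
        have hj1' : (j : ℕ) ≠ 1 := by
          intro h
          exact hj1 (Set.mem_singleton_iff.2 (Fin.ext (by rw [h, hv1])))
        have hji : (j : ℕ) ≤ i := by have := j.isLt; omega
        have := hbm (j : ℕ) (by omega) hji
        show v (j : ℕ) ω < v ((0 : Fin n) : ℕ) ω
        rw [hv0]
        calc v (j : ℕ) ω < max (v 0 ω) (v 1 ω) := this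
          _ = v 0 ω := max_eq_left hc
    · right
      rw [hEBdef]
      intro j hj1
      have hj1' : (j : ℕ) ≠ 1 := by
        intro h; exact hj1 (Fin.ext (by rw [h, hv1]))
      refine ⟨fun h => absurd h (Set.notMem_empty j), fun _ => ?_⟩
      show v (j : ℕ) ω < v ((1 : Fin n) : ℕ) ω
      rw [hv1]
      by_cases hj0' : (j : ℕ) = 0
      · rw [hj0']; linarith [not_le.1 hc]
      · have hji : (j : ℕ) ≤ i := by have := j.isLt; omega
        have := hbm (j : ℕ) (by omega) hji
        calc v (j : ℕ) ω < max (v 0 ω) (v 1 ω) := this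
          _ = v 1 ω := max_eq_right (le_of_lt (not_le.1 hc))
  -- measure bound
  have hmEA : MeasurableSet EA := measurableSet_pivEvent n _ _
  have hmEB : MeasurableSet EB := measurableSet_pivEvent n _ _
  have hcompl : μ Sᶜ ≤ π EA + π EB := by
    calc μ Sᶜ ≤ μ ((fun ω (k : Fin n) => v k ω) ⁻¹' (EA ∪ EB)) := measure_mono hsubset
      _ = (μ.map (fun ω (k : Fin n) => v k ω)) (EA ∪ EB) :=
          (Measure.map_apply hX (hmEA.union hmEB)).symm
      _ = π (EA ∪ EB) := by rw [hlaw]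
      _ ≤ π EA + π EB := measure_union_le _ _
  have hSbound : (1 : ENNReal) ≤ μ S + (π EA + π EB) := by
    calc (1 : ENNReal) = μ Set.univ := measure_univ.symm
      _ = μ (S ∪ Sᶜ) := by rw [Set.union_compl_self]
      _ ≤ μ S + μ Sᶜ := measure_union_le _ _
      _ ≤ μ S + (π EA + π EB) := add_le_add_right hcompl _
  have hμSfin : μ S ≠ ⊤ := measure_ne_top μ S
  have hrhsfin : μ S + (π EA + π EB) ≠ ⊤ := by
    refine ENNReal.add_ne_top.2 ⟨hμSfin, ENNReal.add_ne_top.2 ⟨hfin _, hfin _⟩⟩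
  have hSR : (1 : ℝ) ≤ (μ S).toReal + (tA + tB) := by
    have := ENNReal.toReal_mono hrhsfin hSbound
    rwa [ENNReal.toReal_one, ENNReal.toReal_add hμSfin (ENNReal.add_ne_top.2 ⟨hfin _, hfin _⟩),
      ENNReal.toReal_add (hfin _) (hfin _)] at this
  linarith
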